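/- For all nonnegative integers k₀, k₁, k₂ with k₀+k₁+k₂ = k, every α ∈ Δ₊, and every integer m ≥ 0: τ_{λ₁}(x_α(m)) · x_{α₁}(−1)^{k₁} · x_{α₁+α₂}(−1)^{k₂} ∈ I_{k₂Λ₀+k₀Λ₁+k₁Λ₂}. Explicitly: x_{α₁}(m−1)·x_{α₁}(−1)^{k₁}x_{α₁+α₂}(−1)^{k₂}, x_{α₂}(m)·x_{α₁}(−1)^{k₁}x_{α₁+α₂}(−1)^{k₂}, and x_{α₁+α₂}(m−1)·x_{α₁}(−1)^{k₁}x_{α₁+α₂}(−1)^{k₂} all lie in I_{k₂Λ₀+k₀Λ₁+k₁Λ₂}. -/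

import Mathlib

/- Setup: the nilpotent subalgebra 𝔫 ⊂ 𝔰𝔩(3,ℂ) spanned by E₁₂, E₂₃, E₁₃, its loop
algebra 𝔫̄ = 𝔫 ⊗ ℂ[t,t⁻¹], and the universal enveloping algebra U(𝔫̄). -/

noncomputable section
open scoped TensorProduct

attribute [local instance 100] LieRing.ofAssociativeRing

namespace PrincipalSubspaceSL3

/-- 3×3 complex matrices. -/
abbrev gl3 : Type := Matrix (Fin 3) (Fin 3) ℂ

/-- The root vectors: `Egen 0 = x_{α₁} = E₁₂`, `Egen 1 = x_{α₂} = E₂₃`,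
`Egen 2 = x_{α₁+α₂} = E₁₃`. -/
def Egen : Fin 3 → gl3
  | 0 => Matrix.single 0 1 1
  | 1 => Matrix.single 1 2 1
  | 2 => Matrix.single 0 2 1

lemma egen_lie_mem :
    ∀ x ∈ Submodule.span ℂ (Set.range Egen), ∀ y ∈ Submodule.span ℂ (Set.range Egen),
      ⁅x, y⁆ ∈ Submodule.span ℂ (Set.range Egen) := by
  have key : ∀ a b : Fin 3, ⁅Egen a, Egen b⁆ ∈ Submodule.span ℂ (Set.range Egen) := by
    intro a b
    fin_cases a <;> fin_cases b <;>
      simp only [Egen, Ring.lie_def, Matrix.single_mul_single_same,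
        Matrix.single_mul_single_of_ne, Fin.reduceEq, ne_eq, not_false_eq_true,
        one_mul, sub_zero, zero_sub, sub_self] <;>
      first
        | exact Submodule.zero_mem _
        | exact Submodule.subset_span ⟨2, rfl⟩
        | exact Submodule.neg_mem _ (Submodule.subset_span ⟨2, rfl⟩)
  intro x hx
  induction hx using Submodule.span_induction with
  | mem x hxs =>
      obtain ⟨a, rfl⟩ := hxs
      intro y hy
      induction hy using Submodule.span_induction with
      | mem y hys => obtain ⟨b, rfl⟩ := hys; exact key a b
      | zero => simp
      | add y z hy hz hy' hz' => rw [lie_add]; exact Submodule.add_mem _ hy' hz'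
      | smul c y hy hy' => rw [lie_smul]; exact Submodule.smul_mem _ _ hy'
  | zero => intro y hy; simp
  | add x z hx hz hx' hz' =>
      intro y hy; rw [add_lie]; exact Submodule.add_mem _ (hx' y hy) (hz' y hy)
  | smul c x hx hx' =>
      intro y hy; rw [smul_lie]; exact Submodule.smul_mem _ _ (hx' y hy)

/-- The nilpotent Lie subalgebra 𝔫 = ℂE₁₂ ⊕ ℂE₂₃ ⊕ ℂE₁₃ of 𝔰𝔩(3,ℂ). -/
def nn : LieSubalgebra ℂ gl3 :=
  { Submodule.span ℂ (Set.range Egen) with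
    lie_mem' := fun {x y} hx hy => egen_lie_mem x hx y hy }

/-- Laurent polynomials ℂ[t, t⁻¹]. -/
abbrev A : Type := LaurentPolynomial ℂ

/-- The loop algebra 𝔫̄ = 𝔫 ⊗ ℂ[t,t⁻¹]. -/
abbrev nbar : Type := A ⊗[ℂ] nn

set_option synthInstance.maxHeartbeats 1000000 in
instance : LieAlgebra ℂ nbar where
  lie_smul c x y := by
    have h := lie_smul (algebraMap ℂ A c) x y
    rwa [algebraMap_smul, algebraMap_smul] at h

/-- The root vectors as elements of 𝔫. -/
def en (i : Fin 3) : nn := ⟨Egen i, Submodule.subset_span ⟨i, rfl⟩⟩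

/-- `nx i m` is the element x_{α}(m) = x_α ⊗ tᵐ of 𝔫̄, where α is α₁, α₂, α₁+α₂
according to i = 0, 1, 2. -/
def nx (i : Fin 3) (m : ℤ) : nbar := LaurentPolynomial.T m ⊗ₜ[ℂ] en i

/-- The universal enveloping algebra U(𝔫̄). -/
abbrev U : Type := UniversalEnvelopingAlgebra ℂ nbar

/-- `xg i m` is the element x_α(m) regarded inside U(𝔫̄). -/
def xg (i : Fin 3) (m : ℤ) : U := UniversalEnvelopingAlgebra.ι ℂ (nx i m)

/-- `Rtr k i t` = R^i_{-1,t} : the sum of x_{α_i}(m₁)⋯x_{α_i}(m_{k+1}) over all integer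
tuples with every m_j ≤ -1 and m₁+⋯+m_{k+1} = -t (parametrized by m_j = -1 - n_j with
n : Fin (k+1) → ℕ, ∑ n = t - (k+1)).  Here i : Fin 2 refers to the simple root α_{i+1}. -/
def Rtr (k : ℕ) (i : Fin 2) (t : ℤ) : U :=
  ∑ f ∈ Finset.Nat.antidiagonalTuple (k + 1) (t - (k + 1)).toNat,
    (List.ofFn fun j : Fin (k + 1) => xg i.castSucc (-1 - (f j : ℤ))).prod

/-- The left ideal J = Σ_{i,t≥k+1} U(𝔫̄)·R^i_{-1,t}. -/
def Jid (k : ℕ) : Submodule U U :=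
  Submodule.span U {u : U | ∃ i : Fin 2, ∃ t : ℤ, (k : ℤ) + 1 ≤ t ∧ u = Rtr k i t}

/-- The left ideal U(𝔫̄)·𝔫̄₊, generated by the x_α(m) with m ≥ 0. -/
def nplusIdeal : Submodule U U :=
  Submodule.span U {u : U | ∃ i : Fin 3, ∃ m : ℤ, 0 ≤ m ∧ u = xg i m}

/-- The left ideal I_{kΛ₀} = J + U(𝔫̄)·𝔫̄₊. -/
def IkL0 (k : ℕ) : Submodule U U := Jid k ⊔ nplusIdeal

/-- The left ideal I_{k₀Λ₀+k₁Λ₁+k₂Λ₂} = I_{kΛ₀} + U·x_{α₁}(-1)^{k₀+k₂+1}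
+ U·x_{α₂}(-1)^{k₀+k₁+1} + U·x_{α₁+α₂}(-1)^{k₀+1} (with k = k₀+k₁+k₂). -/
def Iwt (k k0 k1 k2 : ℕ) : Submodule U U :=
  IkL0 k ⊔ Submodule.span U {xg 0 (-1) ^ (k0 + k2 + 1)}
    ⊔ Submodule.span U {xg 1 (-1) ^ (k0 + k1 + 1)}
    ⊔ Submodule.span U {xg 2 (-1) ^ (k0 + 1)}


/-! ### Auxiliary lemmas -/

lemma lie_en_01 : ⁅en 0, en 1⁆ = en 2 := by
  apply Subtype.ext
  show ⁅Egen 0, Egen 1⁆ = Egen 2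
  simp [Egen, Ring.lie_def, Matrix.single_mul_single_same,
    Matrix.single_mul_single_of_ne]

lemma lie_en_02 : ⁅en 0, en 2⁆ = 0 := by
  apply Subtype.ext
  show ⁅Egen 0, Egen 2⁆ = 0
  simp [Egen, Ring.lie_def, Matrix.single_mul_single_of_ne]

lemma lie_en_12 : ⁅en 1, en 2⁆ = 0 := by
  apply Subtype.ext
  show ⁅Egen 1, Egen 2⁆ = 0
  simp [Egen, Ring.lie_def, Matrix.single_mul_single_of_ne]

lemma lie_nx (i j : Fin 3) (a b : ℤ) :
    ⁅nx i a, nx j b⁆ = (LaurentPolynomial.T (a + b) : A) ⊗ₜ[ℂ] ⁅en i, en j⁆ := by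
  rw [LaurentPolynomial.T_add]
  rfl

lemma lie_xg (i j : Fin 3) (a b : ℤ) :
    xg i a * xg j b - xg j b * xg i a =
      UniversalEnvelopingAlgebra.ι ℂ
        ((LaurentPolynomial.T (a + b) : A) ⊗ₜ[ℂ] ⁅en i, en j⁆) := by
  have h := (UniversalEnvelopingAlgebra.ι ℂ (L := nbar)).map_lie (x := nx i a) (y := nx j b)
  rw [lie_nx] at h
  rw [h]
  rfl

lemma xg_commute (i j : Fin 3) (a b : ℤ) (h : ⁅en i, en j⁆ = 0) :
    Commute (xg i a) (xg j b) := by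
  have h2 := lie_xg i j a b
  rw [h, TensorProduct.tmul_zero, map_zero, sub_eq_zero] at h2
  exact h2

lemma commute_02 (a b : ℤ) : Commute (xg 0 a) (xg 2 b) := xg_commute 0 2 a b lie_en_02
lemma commute_12 (a b : ℤ) : Commute (xg 1 a) (xg 2 b) := xg_commute 1 2 a b lie_en_12
lemma commute_00 (a b : ℤ) : Commute (xg 0 a) (xg 0 b) :=
  xg_commute 0 0 a b (lie_self _)
lemma commute_22 (a b : ℤ) : Commute (xg 2 a) (xg 2 b) :=
  xg_commute 2 2 a b (lie_self _)

lemma xg1_mul_xg0 (a b : ℤ) :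
    xg 1 a * xg 0 b = xg 0 b * xg 1 a - xg 2 (a + b) := by
  have h10 : ⁅en 1, en 0⁆ = -en 2 := by rw [← lie_skew, lie_en_01]
  have h : xg 1 a * xg 0 b - xg 0 b * xg 1 a = -(xg 2 (a + b)) := by
    have h2 := lie_xg 1 0 a b
    rw [h10, TensorProduct.tmul_neg, map_neg] at h2
    exact h2
  have h3 := eq_add_of_sub_eq h
  rw [h3, neg_add_eq_sub]

/-- x_{α₂}(m) moved past a power of x_{α₁}(b). -/
lemma xg1_mul_xg0_pow (m b : ℤ) (n : ℕ) :
    xg 1 m * xg 0 b ^ (n + 1) =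
      xg 0 b ^ (n + 1) * xg 1 m - ((n : ℂ) + 1) • (xg 0 b ^ n * xg 2 (m + b)) := by
  induction n with
  | zero => simpa using xg1_mul_xg0 m b
  | succ n ih =>
      have hc : xg 2 (m + b) * xg 0 b = xg 0 b * xg 2 (m + b) :=
        ((commute_02 b (m + b)).symm).eq
      calc xg 1 m * xg 0 b ^ (n + 1 + 1)
          = (xg 1 m * xg 0 b ^ (n + 1)) * xg 0 b := by rw [pow_succ, mul_assoc]
        _ = (xg 0 b ^ (n + 1) * xg 1 m) * xg 0 b
              - ((n : ℂ) + 1) • ((xg 0 b ^ n * xg 2 (m + b)) * xg 0 b) := by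
            rw [ih, sub_mul, smul_mul_assoc]
        _ = xg 0 b ^ (n + 1) * (xg 0 b * xg 1 m - xg 2 (m + b))
              - ((n : ℂ) + 1) • (xg 0 b ^ (n + 1) * xg 2 (m + b)) := by
            rw [mul_assoc, xg1_mul_xg0, mul_assoc, hc, ← mul_assoc, ← pow_succ]
        _ = xg 0 b ^ (n + 1 + 1) * xg 1 m
              - ((↑(n + 1) : ℂ) + 1) • (xg 0 b ^ (n + 1) * xg 2 (m + b)) := by
            rw [mul_sub, ← mul_assoc, ← pow_succ]
            push_cast
            module

/-- x_{α₂}(m) moved past x_{α₁}(-1)^{a+1} x_{α₁+α₂}(-1)^b. -/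
lemma xg1_move (m : ℤ) (a b : ℕ) :
    xg 1 m * (xg 0 (-1) ^ (a + 1) * xg 2 (-1) ^ b) =
      xg 0 (-1) ^ (a + 1) * xg 2 (-1) ^ b * xg 1 m
        - ((a : ℂ) + 1) • (xg 0 (-1) ^ a * (xg 2 (m + -1) * xg 2 (-1) ^ b)) := by
  have h1 := xg1_mul_xg0_pow m (-1) a
  have h2 : xg 1 m * xg 2 (-1) ^ b = xg 2 (-1) ^ b * xg 1 m :=
    ((commute_12 m (-1)).pow_right b).eq
  calc xg 1 m * (xg 0 (-1) ^ (a + 1) * xg 2 (-1) ^ b)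
      = (xg 1 m * xg 0 (-1) ^ (a + 1)) * xg 2 (-1) ^ b := by rw [mul_assoc]
    _ = (xg 0 (-1) ^ (a + 1) * xg 1 m) * xg 2 (-1) ^ b
          - ((a : ℂ) + 1) • ((xg 0 (-1) ^ a * xg 2 (m + -1)) * xg 2 (-1) ^ b) := by
        rw [h1, sub_mul, smul_mul_assoc]
    _ = xg 0 (-1) ^ (a + 1) * xg 2 (-1) ^ b * xg 1 m
          - ((a : ℂ) + 1) • (xg 0 (-1) ^ a * (xg 2 (m + -1) * xg 2 (-1) ^ b)) := by
        rw [mul_assoc, h2, ← mul_assoc, mul_assoc (xg 0 (-1) ^ a)]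

lemma xg_mem_nplus (i : Fin 3) (m : ℤ) (hm : 0 ≤ m) (u : U) :
    u * xg i m ∈ nplusIdeal := by
  have h : xg i m ∈ nplusIdeal := Submodule.subset_span ⟨i, m, hm, rfl⟩
  simpa using nplusIdeal.smul_mem u h

lemma nplus_le_Iwt (k a b c : ℕ) : nplusIdeal ≤ Iwt k a b c := by
  unfold Iwt IkL0
  exact le_sup_right.trans (le_sup_left.trans (le_sup_left.trans le_sup_left))

lemma s0_mem_Iwt (k a b c : ℕ) (u : U) :
    u * xg 0 (-1) ^ (a + c + 1) ∈ Iwt k a b c := by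
  have h : u * xg 0 (-1) ^ (a + c + 1) ∈
      Submodule.span U {xg 0 (-1) ^ (a + c + 1)} := by
    simpa using (Submodule.span U {xg 0 (-1) ^ (a + c + 1)}).smul_mem u
      (Submodule.subset_span rfl)
  have hle : Submodule.span U {xg 0 (-1) ^ (a + c + 1)} ≤ Iwt k a b c := by
    unfold Iwt
    exact le_sup_right.trans (le_sup_left.trans le_sup_left)
  exact hle h

lemma s2_mem_Iwt (k a b c : ℕ) (u : U) :
    u * xg 2 (-1) ^ (a + 1) ∈ Iwt k a b c := by
  have h : u * xg 2 (-1) ^ (a + 1) ∈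
      Submodule.span U {xg 2 (-1) ^ (a + 1)} := by
    simpa using (Submodule.span U {xg 2 (-1) ^ (a + 1)}).smul_mem u
      (Submodule.subset_span rfl)
  have hle : Submodule.span U {xg 2 (-1) ^ (a + 1)} ≤ Iwt k a b c := by
    unfold Iwt
    exact le_sup_right
  exact hle h

lemma csmul_mem {I : Submodule U U} (c : ℂ) {v : U} (h : v ∈ I) : c • v ∈ I := by
  have h2 := I.smul_mem (algebraMap ℂ U c) h
  rwa [algebraMap_smul] at h2

lemma smul_cancel_mem {I : Submodule U U} {v : U} (c : ℂ) (hc : c ≠ 0)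
    (h : c • v ∈ I) : v ∈ I := by
  have h2 : c⁻¹ • (c • v) ∈ I := csmul_mem c⁻¹ h
  rwa [smul_smul, inv_mul_cancel₀ hc, one_smul] at h2

/-- The key inductive step: x_{α₁}(-1)^a x_{α₁+α₂}(-1)^b ∈ I when a + b = k₁+k₂+1,
b ≤ k₂. -/
lemma key_pow_mem (k k0 k1 k2 : ℕ) :
    ∀ b a : ℕ, a + b = k1 + k2 + 1 → b ≤ k2 →
      xg 0 (-1) ^ a * xg 2 (-1) ^ b ∈ Iwt k k2 k0 k1 := by
  intro b
  induction b with
  | zero =>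
      intro a ha _
      have h : a = k2 + k1 + 1 := by omega
      subst h
      simpa using s0_mem_Iwt k k2 k0 k1 1
  | succ b ih =>
      intro a ha hb
      have hIH : xg 0 (-1) ^ (a + 1) * xg 2 (-1) ^ b ∈ Iwt k k2 k0 k1 :=
        ih (a + 1) (by omega) (by omega)
      have hmv := xg1_move 0 a b
      have hz : (0 : ℤ) + -1 = -1 := by norm_num
      rw [hz] at hmv
      have key : ((a : ℂ) + 1) • (xg 0 (-1) ^ a * (xg 2 (-1) * xg 2 (-1) ^ b)) =
          xg 0 (-1) ^ (a + 1) * xg 2 (-1) ^ b * xg 1 0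
            - xg 1 0 * (xg 0 (-1) ^ (a + 1) * xg 2 (-1) ^ b) := by
        rw [hmv, sub_sub_cancel]
      have hmem : ((a : ℂ) + 1) • (xg 0 (-1) ^ a * (xg 2 (-1) * xg 2 (-1) ^ b)) ∈
          Iwt k k2 k0 k1 := by
        rw [key]
        refine Submodule.sub_mem _ ?_ ?_
        · exact nplus_le_Iwt k k2 k0 k1 (xg_mem_nplus 1 0 le_rfl _)
        · simpa using (Iwt k k2 k0 k1).smul_mem (xg 1 0) hIH
      have hfin := smul_cancel_mem ((a : ℂ) + 1)
        (Nat.cast_add_one_ne_zero a) hmem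
      rwa [← pow_succ'] at hfin

/-- for k₀+k₁+k₂ = k, every α ∈ Δ₊ and every m ≥ 0,
τ_{λ₁}(x_α(m))·x_{α₁}(−1)^{k₁}·x_{α₁+α₂}(−1)^{k₂} ∈ I_{k₂Λ₀+k₀Λ₁+k₁Λ₂}; explicitly,
x_{α₁}(m−1)·x_{α₁}(−1)^{k₁}x_{α₁+α₂}(−1)^{k₂}, x_{α₂}(m)·x_{α₁}(−1)^{k₁}x_{α₁+α₂}(−1)^{k₂}
and x_{α₁+α₂}(m−1)·x_{α₁}(−1)^{k₁}x_{α₁+α₂}(−1)^{k₂} all lie in I_{k₂Λ₀+k₀Λ₁+k₁Λ₂}. -/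
theorem statement12 (k : ℕ) (hk : 0 < k) (k0 k1 k2 : ℕ) (hsum : k0 + k1 + k2 = k)
    (m : ℤ) (hm : 0 ≤ m) :
    xg 0 (m - 1) * xg 0 (-1) ^ k1 * xg 2 (-1) ^ k2 ∈ Iwt k k2 k0 k1 ∧
      xg 1 m * xg 0 (-1) ^ k1 * xg 2 (-1) ^ k2 ∈ Iwt k k2 k0 k1 ∧
      xg 2 (m - 1) * xg 0 (-1) ^ k1 * xg 2 (-1) ^ k2 ∈ Iwt k k2 k0 k1 := by
  have move : ∀ (i : Fin 3) (p : ℤ), Commute (xg i p) (xg 0 (-1)) →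
      Commute (xg i p) (xg 2 (-1)) →
      xg i p * xg 0 (-1) ^ k1 * xg 2 (-1) ^ k2 =
        xg 0 (-1) ^ k1 * xg 2 (-1) ^ k2 * xg i p := by
    intro i p h1 h2
    rw [(h1.pow_right k1).eq, mul_assoc, (h2.pow_right k2).eq, ← mul_assoc]
  refine ⟨?_, ?_, ?_⟩
  · -- x_{α₁}(m-1)
    rcases eq_or_lt_of_le hm with h | h
    · have hm1 : m - 1 = -1 := by omega
      rw [hm1, ← pow_succ']
      exact key_pow_mem k k0 k1 k2 k2 (k1 + 1) (by omega) le_rfl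
    · rw [move 0 (m - 1) (commute_00 _ _) (commute_02 _ _)]
      exact nplus_le_Iwt k k2 k0 k1 (xg_mem_nplus 0 (m - 1) (by omega) _)
  · -- x_{α₂}(m)
    cases k1 with
    | zero =>
        rw [pow_zero, mul_one, ((commute_12 m (-1)).pow_right k2).eq]
        exact nplus_le_Iwt k k2 k0 0 (xg_mem_nplus 1 m hm _)
    | succ j =>
        rw [mul_assoc, xg1_move m j k2]
        refine Submodule.sub_mem _ ?_ ?_
        · exact nplus_le_Iwt k k2 k0 (j + 1) (xg_mem_nplus 1 m hm _)
        · refine csmul_mem _ ?_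
          rcases eq_or_lt_of_le hm with h | h
          · have hm1 : m + -1 = -1 := by omega
            rw [hm1, ← pow_succ']
            exact s2_mem_Iwt k k2 k0 (j + 1) _
          · rw [((commute_22 (m + -1) (-1)).pow_right k2).eq, ← mul_assoc]
            exact nplus_le_Iwt k k2 k0 (j + 1) (xg_mem_nplus 2 (m + -1) (by omega) _)
  · -- x_{α₁+α₂}(m-1)
    rcases eq_or_lt_of_le hm with h | h
    · have hm1 : m - 1 = -1 := by omega
      rw [hm1, ((commute_02 (-1) (-1)).symm.pow_right k1).eq, mul_assoc, ← pow_succ']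
      exact s2_mem_Iwt k k2 k0 k1 _
    · rw [move 2 (m - 1) (commute_02 (-1) (m - 1)).symm (commute_22 _ _)]
      exact nplus_le_Iwt k k2 k0 k1 (xg_mem_nplus 2 (m - 1) (by omega) _)

end PrincipalSubspaceSL3
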